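/- Let F : ℝ^n × ℝ^m × ℝ^m × ℝ^l → ℝ^{m+l} be differentiable at u = (x,y,w,z), let σ ∈ ℝ, and let d = (dx,dy,dw,dz) be a direction satisfying the linearized Newton equation DF(u)[d] = −F(u) and the perturbed complementarity equations w_j dy_j + y_j dw_j = −w_j y_j + σ (yᵀw)/m for every j = 1,…,m. Then the derivative of φ(x,y,w,z) := ‖F(x,y,w,z)‖² + yᵀw at u in the direction d equals −2‖F(u)‖² − (1−σ) yᵀw. -/

import Mathlib

/-- If `F` is differentiable at `u = (x,y,w,z)` with derivative `F'`,
`d = (dx,dy,dw,dz)` satisfies the linearized Newton equation `F'(d) = -F(u)` and the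
perturbed complementarity equations `w_j dy_j + y_j dw_j = -w_j y_j + σ (yᵀw)/m` for all
`j`, then the derivative of `φ(x,y,w,z) = ‖F(x,y,w,z)‖² + yᵀw` at `u` in the direction
`d` equals `-2‖F(u)‖² - (1-σ) yᵀw`. -/
theorem constraintViolation_directionalDerivative
    (n m l : ℕ)
    (F : (Fin n → ℝ) × (Fin m → ℝ) × (Fin m → ℝ) × (Fin l → ℝ) →
      EuclideanSpace ℝ (Fin (m + l)))
    (u : (Fin n → ℝ) × (Fin m → ℝ) × (Fin m → ℝ) × (Fin l → ℝ))
    (F' : ((Fin n → ℝ) × (Fin m → ℝ) × (Fin m → ℝ) × (Fin l → ℝ)) →L[ℝ]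
      EuclideanSpace ℝ (Fin (m + l)))
    (hF : HasFDerivAt F F' u)
    (σ : ℝ)
    (d : (Fin n → ℝ) × (Fin m → ℝ) × (Fin m → ℝ) × (Fin l → ℝ))
    (hNewton : F' d = -F u)
    (hPert : ∀ j : Fin m, u.2.2.1 j * d.2.1 j + u.2.1 j * d.2.2.1 j
      = -(u.2.2.1 j * u.2.1 j) + σ * ((∑ i, u.2.1 i * u.2.2.1 i) / m)) :
    ∃ φ' : ((Fin n → ℝ) × (Fin m → ℝ) × (Fin m → ℝ) × (Fin l → ℝ)) →L[ℝ] ℝ,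
      HasFDerivAt (fun v => ‖F v‖ ^ 2 + ∑ i, v.2.1 i * v.2.2.1 i) φ' u ∧
      φ' d = -2 * ‖F u‖ ^ 2 - (1 - σ) * ∑ i, u.2.1 i * u.2.2.1 i := by
  classical
  -- projections
  let Py : Fin m → (((Fin n → ℝ) × (Fin m → ℝ) × (Fin m → ℝ) × (Fin l → ℝ)) →L[ℝ] ℝ) := fun i =>
    (ContinuousLinearMap.proj i).comp
      ((ContinuousLinearMap.fst ℝ (Fin m → ℝ) ((Fin m → ℝ) × (Fin l → ℝ))).comp
        (ContinuousLinearMap.snd ℝ (Fin n → ℝ) ((Fin m → ℝ) × (Fin m → ℝ) × (Fin l → ℝ))))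
  let Pw : Fin m → (((Fin n → ℝ) × (Fin m → ℝ) × (Fin m → ℝ) × (Fin l → ℝ)) →L[ℝ] ℝ) := fun i =>
    (ContinuousLinearMap.proj i).comp
      ((ContinuousLinearMap.fst ℝ (Fin m → ℝ) (Fin l → ℝ)).comp
        ((ContinuousLinearMap.snd ℝ (Fin m → ℝ) ((Fin m → ℝ) × (Fin l → ℝ))).comp
          (ContinuousLinearMap.snd ℝ (Fin n → ℝ) ((Fin m → ℝ) × (Fin m → ℝ) × (Fin l → ℝ)))))
  have hPy : ∀ i, HasFDerivAt (fun v : (Fin n → ℝ) × (Fin m → ℝ) × (Fin m → ℝ) × (Fin l → ℝ) => v.2.1 i) (Py i) u := fun i =>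
    (Py i).hasFDerivAt
  have hPw : ∀ i, HasFDerivAt (fun v : (Fin n → ℝ) × (Fin m → ℝ) × (Fin m → ℝ) × (Fin l → ℝ) => v.2.2.1 i) (Pw i) u := fun i =>
    (Pw i).hasFDerivAt
  have hB : HasFDerivAt (fun v : (Fin n → ℝ) × (Fin m → ℝ) × (Fin m → ℝ) × (Fin l → ℝ) => ∑ i, v.2.1 i * v.2.2.1 i)
      (∑ i, (u.2.1 i • Pw i + u.2.2.1 i • Py i)) u := by
    have := HasFDerivAt.fun_sum (u := (Finset.univ : Finset (Fin m)))
      (A' := fun i => u.2.1 i • Pw i + u.2.2.1 i • Py i)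
      (fun i _ => (hPy i).mul (hPw i))
    simpa using this
  have hnorm : HasFDerivAt (fun v : (Fin n → ℝ) × (Fin m → ℝ) × (Fin m → ℝ) × (Fin l → ℝ) => ‖F v‖ ^ 2)
      ((fderivInnerCLM ℝ (F u, F u)).comp (F'.prod F')) u := by
    have h := hF.inner (𝕜 := ℝ) hF
    have : (fun v : (Fin n → ℝ) × (Fin m → ℝ) × (Fin m → ℝ) × (Fin l → ℝ) => ‖F v‖ ^ 2) = fun v : (Fin n → ℝ) × (Fin m → ℝ) × (Fin m → ℝ) × (Fin l → ℝ) => (inner ℝ (F v) (F v) : ℝ) := by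
      funext v
      rw [real_inner_self_eq_norm_sq]
    rw [this]
    exact h
  refine ⟨_, hnorm.add hB, ?_⟩
  have hval1 : ((fderivInnerCLM ℝ (F u, F u)).comp (F'.prod F')) d
      = -2 * ‖F u‖ ^ 2 := by
    simp only [ContinuousLinearMap.comp_apply, ContinuousLinearMap.prod_apply,
      fderivInnerCLM_apply, hNewton]
    rw [inner_neg_right, inner_neg_left, real_inner_self_eq_norm_sq]
    ring
  have hval2 : (∑ i, (u.2.1 i • Pw i + u.2.2.1 i • Py i)) d
      = -(1 - σ) * ∑ i, u.2.1 i * u.2.2.1 i := by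
    have happ : (∑ i, (u.2.1 i • Pw i + u.2.2.1 i • Py i)) d
        = ∑ i, (u.2.1 i * d.2.2.1 i + u.2.2.1 i * d.2.1 i) := by
      rw [ContinuousLinearMap.sum_apply]
      simp [Py, Pw]
    rw [happ]
    have : ∀ i : Fin m, u.2.1 i * d.2.2.1 i + u.2.2.1 i * d.2.1 i
        = -(u.2.2.1 i * u.2.1 i) + σ * ((∑ i, u.2.1 i * u.2.2.1 i) / m) := by
      intro i
      rw [← hPert i]; ring
    rw [Finset.sum_congr rfl fun i _ => this i, Finset.sum_add_distrib,
      Finset.sum_const, Finset.sum_neg_distrib]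
    rcases Nat.eq_zero_or_pos m with hm | hm
    · subst hm; simp
    · have hm' : (m : ℝ) ≠ 0 := Nat.cast_ne_zero.mpr hm.ne'
      have hc : ∀ i : Fin m, u.2.2.1 i * u.2.1 i = u.2.1 i * u.2.2.1 i := fun i => mul_comm _ _
      rw [Finset.sum_congr rfl fun i _ => hc i]
      simp only [nsmul_eq_mul, Finset.card_univ, Fintype.card_fin]
      field_simp
      ring
  rw [ContinuousLinearMap.add_apply, hval1, hval2]
  ring
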